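/- Let P = (1/100)·P₁ + (99/100)·P₂ where P₁ is uniform on [0,1/3] and P₂ is uniform on [2/3,1]. Then the optimal set of three-means for P is {1/6, 3/4, 11/12}, with quantization error V₃ = 103/43200. -/

import Mathlib

open MeasureTheory Set

noncomputable def unif (a b : ℝ) : Measure ℝ :=
  (ENNReal.ofReal (b - a))⁻¹ • (volume.restrict (Icc a b))

noncomputable def mix (p : ℝ) (P₁ P₂ : Measure ℝ) : Measure ℝ :=
  ENNReal.ofReal p • P₁ + ENNReal.ofReal (1 - p) • P₂

noncomputable def distortion (P : Measure ℝ) (γ : Finset ℝ) : ℝ :=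
  ∫ x, sInf ((fun c => (x - c) ^ 2) '' (γ : Set ℝ)) ∂P

noncomputable def quantErr (P : Measure ℝ) (n : ℕ) : ℝ :=
  sInf { v | ∃ γ : Finset ℝ, γ.Nonempty ∧ γ.card ≤ n ∧ v = distortion P γ }

def IsOptimal (P : Measure ℝ) (n : ℕ) (γ : Finset ℝ) : Prop :=
  γ.Nonempty ∧ γ.card ≤ n ∧ distortion P γ = quantErr P n

noncomputable def F (S : Finset ℝ) (x : ℝ) : ℝ := sInf ((fun c => (x - c) ^ 2) '' (S : Set ℝ))

noncomputable def capF (r : ℝ) (T : Finset ℝ) (x : ℝ) : ℝ :=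
  sInf (insert (r ^ 2) ((fun c => (x - c) ^ 2) '' (T : Set ℝ)))

lemma bdd (s : Finset ℝ) (x : ℝ) : BddBelow ((fun c => (x - c) ^ 2) '' (s : Set ℝ)) :=
  (s.finite_toSet.image _).bddBelow

lemma bdd' (r : ℝ) (s : Finset ℝ) (x : ℝ) :
    BddBelow (insert (r ^ 2) ((fun c => (x - c) ^ 2) '' (s : Set ℝ))) :=
  ((s.finite_toSet.image _).insert _).bddBelow

lemma capF_empty (r x : ℝ) : capF r ∅ x = r ^ 2 := by simp [capF]

lemma capF_cons (r : ℝ) (c : ℝ) (T : Finset ℝ) (h : c ∉ T) (x : ℝ) :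
    capF r (Finset.cons c T h) x = min ((x - c) ^ 2) (capF r T x) := by
  have e : (insert (r ^ 2) ((fun c => (x - c) ^ 2) '' ((Finset.cons c T h : Finset ℝ) : Set ℝ)))
      = insert ((x - c) ^ 2) (insert (r ^ 2) ((fun c => (x - c) ^ 2) '' (T : Set ℝ))) := by
    rw [Finset.cons_eq_insert, Finset.coe_insert, Set.image_insert_eq, Set.insert_comm]
  rw [capF, e, csInf_insert (bdd' r T x) (Set.insert_nonempty _ _)]
  rfl

lemma capF_nonneg (r : ℝ) (T : Finset ℝ) (x : ℝ) : 0 ≤ capF r T x := by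
  apply le_csInf (Set.insert_nonempty _ _)
  rintro b (rfl | ⟨c, _, rfl⟩) <;> positivity

lemma capF_le_rsq (r : ℝ) (T : Finset ℝ) (x : ℝ) : capF r T x ≤ r ^ 2 :=
  csInf_le (bdd' r T x) (Set.mem_insert _ _)

lemma capF_le_sq (r : ℝ) (T : Finset ℝ) (x c : ℝ) (hc : c ∈ T) : capF r T x ≤ (x - c) ^ 2 :=
  csInf_le (bdd' r T x) (Set.mem_insert_of_mem _ ⟨c, by simpa using hc, rfl⟩)

lemma capF_continuous (r : ℝ) (T : Finset ℝ) : Continuous (capF r T) := by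
  induction T using Finset.cons_induction_on with
  | empty => simpa [funext (capF_empty r)] using continuous_const
  | cons _ _ h ih =>
      rename_i c T
      have e : capF r (Finset.cons c T h) = fun x => min ((x - c) ^ 2) (capF r T x) :=
        funext fun x => capF_cons r c T h x
      rw [e]
      exact Continuous.min (by continuity) ih

lemma F_le_sq (S : Finset ℝ) (x c : ℝ) (hc : c ∈ S) : F S x ≤ (x - c) ^ 2 :=
  csInf_le (bdd S x) ⟨c, by simpa using hc, rfl⟩

lemma F_nonneg (S : Finset ℝ) (hS : S.Nonempty) (x : ℝ) : 0 ≤ F S x := by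
  apply le_csInf (hS.to_set.image _)
  rintro b ⟨c, _, rfl⟩; positivity

lemma F_cons (c : ℝ) (T : Finset ℝ) (h : c ∉ T) (hT : T.Nonempty) (x : ℝ) :
    F (Finset.cons c T h) x = min ((x - c) ^ 2) (F T x) := by
  have e : ((fun c => (x - c) ^ 2) '' ((Finset.cons c T h : Finset ℝ) : Set ℝ))
      = insert ((x - c) ^ 2) ((fun c => (x - c) ^ 2) '' (T : Set ℝ)) := by
    rw [Finset.cons_eq_insert, Finset.coe_insert, Set.image_insert_eq]
  rw [F, e, csInf_insert (bdd T x) (hT.to_set.image _)]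
  rfl

lemma F_singleton (c x : ℝ) : F {c} x = (x - c) ^ 2 := by simp [F]

lemma F_continuous (S : Finset ℝ) (hS : S.Nonempty) : Continuous (F S) := by
  induction hS using Finset.Nonempty.cons_induction with
  | singleton c => simpa [funext (F_singleton c)] using (by continuity : Continuous fun x : ℝ => (x - c) ^ 2)
  | cons c T h hT ih =>
      have e : F (Finset.cons c T h) = fun x => min ((x - c) ^ 2) (F T x) :=
        funext fun x => F_cons c T h hT x
      rw [e]
      exact Continuous.min (by continuity) ih

lemma F_ge_capF (S : Finset ℝ) (hS : S.Nonempty) (p q r x : ℝ) (hx : x ∈ Icc p q) (hr : 0 < r) :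
    capF r (S.filter (fun c => p - r < c ∧ c < q + r)) x ≤ F S x := by
  classical
  apply le_csInf (hS.to_set.image _)
  rintro b ⟨c, hc, rfl⟩
  simp only [Finset.mem_coe] at hc
  by_cases hnear : p - r < c ∧ c < q + r
  · exact capF_le_sq _ _ _ _ (Finset.mem_filter.2 ⟨hc, hnear⟩)
  · refine (capF_le_rsq r _ x).trans ?_
    obtain ⟨hxp, hxq⟩ := hx
    show r ^ 2 ≤ (x - c) ^ 2
    rcases not_and_or.1 hnear with h' | h' <;> push_neg at h' <;> nlinarith

lemma F_ge_far (S : Finset ℝ) (hS : S.Nonempty) (t x : ℝ) (ht : ∀ c ∈ S, t ≤ c) (hx : x ≤ t) :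
    (x - t) ^ 2 ≤ F S x := by
  apply le_csInf (hS.to_set.image _)
  rintro b ⟨c, hc, rfl⟩
  have := ht c (by simpa using hc)
  show (x - t) ^ 2 ≤ (x - c) ^ 2
  nlinarith

lemma isq (a b c : ℝ) : ∫ x in a..b, (x - c) ^ 2 = ((b - c) ^ 3 - (a - c) ^ 3) / 3 := by
  rw [intervalIntegral.integral_comp_sub_right (fun x => x ^ 2) c, integral_pow]
  norm_num

lemma isq' (a b c : ℝ) (hab : a ≤ b) :
    ∫ x in Icc a b, (x - c) ^ 2 = ((b - c) ^ 3 - (a - c) ^ 3) / 3 := by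
  rw [integral_Icc_eq_integral_Ioc, ← intervalIntegral.integral_of_le hab, isq]

lemma iconst (a b C : ℝ) (hab : a ≤ b) : ∫ _x in Icc a b, C = (b - a) * C := by
  rw [setIntegral_const, Real.volume_real_Icc_of_le hab, smul_eq_mul]

lemma maxint (c r : ℝ) (hr : 0 ≤ r) :
    ∫ x : ℝ, max (r ^ 2 - (x - c) ^ 2) 0 = 4 / 3 * r ^ 3 := by
  have hind : (fun x : ℝ => max (r ^ 2 - (x - c) ^ 2) 0)
      = (Icc (c - r) (c + r)).indicator (fun x => max (r ^ 2 - (x - c) ^ 2) 0) := by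
    funext x
    by_cases hx : x ∈ Icc (c - r) (c + r)
    · rw [Set.indicator_of_mem hx]
    · rw [Set.indicator_of_notMem hx]
      simp only [mem_Icc, not_and_or, not_le] at hx
      rcases hx with h | h <;> [skip; skip] <;>
        · rw [max_eq_right]; nlinarith
  rw [hind, integral_indicator measurableSet_Icc]
  have : ∫ x in Icc (c - r) (c + r), max (r ^ 2 - (x - c) ^ 2) 0
      = ∫ x in Icc (c - r) (c + r), (r ^ 2 - (x - c) ^ 2) := by
    apply setIntegral_congr_fun measurableSet_Icc
    intro x hx
    simp only [mem_Icc] at hx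
    show max (r ^ 2 - (x - c) ^ 2) 0 = _
    rw [max_eq_left]; nlinarith
  rw [this]
  have h1 : IntegrableOn (fun _x : ℝ => r ^ 2) (Icc (c - r) (c + r)) := by
    exact (continuous_const).integrableOn_Icc
  have h2 : IntegrableOn (fun x : ℝ => (x - c) ^ 2) (Icc (c - r) (c + r)) := by
    exact ((continuous_id.sub continuous_const).pow 2 : Continuous fun x : ℝ => (x - c) ^ 2).integrableOn_Icc
  rw [integral_sub h1 h2, iconst _ _ _ (by linarith), isq' _ _ _ (by linarith)]
  ring

lemma capF_cons_ge (r c : ℝ) (T : Finset ℝ) (h : c ∉ T) (x : ℝ) :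
    capF r T x - max (r ^ 2 - (x - c) ^ 2) 0 ≤ capF r (Finset.cons c T h) x := by
  rw [capF_cons]
  have h1 := capF_le_rsq r T x
  rcases le_total ((x - c) ^ 2) (r ^ 2) with hc' | hc'
  · rw [max_eq_left (by linarith)]
    exact le_min (by linarith) (by linarith)
  · rw [max_eq_right (by linarith)]
    exact le_min (by linarith) (by linarith)

lemma cappedAux (p q r : ℝ) (hr : 0 < r) (hpq : p ≤ q) (T : Finset ℝ) :
    (q - p) * r ^ 2 - 4 / 3 * T.card * r ^ 3 ≤ ∫ x in Icc p q, capF r T x := by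
  induction T using Finset.cons_induction_on with
  | empty =>
      have e : ∀ x : ℝ, capF r (∅ : Finset ℝ) x = r ^ 2 := capF_empty r
      rw [setIntegral_congr_fun measurableSet_Icc (fun x _ => e x), iconst _ _ _ hpq]
      simp
  | cons _ _ h ih =>
      rename_i c T
      have hmaxcont : Continuous fun x : ℝ => max (r ^ 2 - (x - c) ^ 2) 0 :=
        ((continuous_const.sub ((continuous_id.sub continuous_const).pow 2)).max continuous_const)
      have hint1 : IntegrableOn (capF r T) (Icc p q) := (capF_continuous r T).integrableOn_Icc
      have hint2 : IntegrableOn (fun x : ℝ => max (r ^ 2 - (x - c) ^ 2) 0) (Icc p q) :=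
        hmaxcont.integrableOn_Icc
      have hintmax : Integrable (fun x : ℝ => max (r ^ 2 - (x - c) ^ 2) 0) := by
        apply Continuous.integrable_of_hasCompactSupport hmaxcont
        apply HasCompactSupport.intro isCompact_Icc (K := Icc (c - r) (c + r))
        intro x hx
        simp only [mem_Icc, not_and_or, not_le] at hx
        rcases hx with h' | h' <;> · rw [max_eq_right]; nlinarith
      have step1 : (∫ x in Icc p q, capF r T x) - (∫ x in Icc p q, max (r ^ 2 - (x - c) ^ 2) 0)
          ≤ ∫ x in Icc p q, capF r (Finset.cons c T h) x := by
        rw [← integral_sub hint1 hint2]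
        apply setIntegral_mono_on (hint1.sub hint2)
          ((capF_continuous r _).integrableOn_Icc) measurableSet_Icc
        intro x _
        exact capF_cons_ge r c T h x
      have step2 : ∫ x in Icc p q, max (r ^ 2 - (x - c) ^ 2) 0 ≤ 4 / 3 * r ^ 3 := by
        rw [← maxint c r hr.le]
        exact setIntegral_le_integral hintmax (Filter.Eventually.of_forall fun x => le_max_right _ _)
      calc (q - p) * r ^ 2 - 4 / 3 * (Finset.cons c T h).card * r ^ 3
          = ((q - p) * r ^ 2 - 4 / 3 * T.card * r ^ 3) - 4 / 3 * r ^ 3 := by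
            rw [Finset.card_cons]; push_cast; ring
        _ ≤ (∫ x in Icc p q, capF r T x) - (∫ x in Icc p q, max (r ^ 2 - (x - c) ^ 2) 0) := by
            have := ih
            linarith [step2, ih]
        _ ≤ _ := step1

lemma window_bound (S : Finset ℝ) (hS : S.Nonempty) (p q r : ℝ) (hr : 0 < r) (hpq : p ≤ q)
    (k : ℕ) (hk : (S.filter (fun c => p - r < c ∧ c < q + r)).card ≤ k) :
    (q - p) * r ^ 2 - 4 / 3 * k * r ^ 3 ≤ ∫ x in Icc p q, F S x := by
  classical
  set T := S.filter (fun c => p - r < c ∧ c < q + r) with hT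
  calc (q - p) * r ^ 2 - 4 / 3 * k * r ^ 3
      ≤ (q - p) * r ^ 2 - 4 / 3 * T.card * r ^ 3 := by
        have : (T.card : ℝ) ≤ (k : ℝ) := by exact_mod_cast hk
        nlinarith [pow_pos hr 3]
    _ ≤ ∫ x in Icc p q, capF r T x := cappedAux p q r hr hpq T
    _ ≤ ∫ x in Icc p q, F S x := by
        apply setIntegral_mono_on ((capF_continuous r T).integrableOn_Icc)
          ((F_continuous S hS).integrableOn_Icc) measurableSet_Icc
        intro x hx
        exact F_ge_capF S hS p q r x hx hr


lemma integrable_unif (f : ℝ → ℝ) (hf : Continuous f) (a b : ℝ) (hab : a < b) :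
    Integrable f (unif a b) := by
  apply Integrable.smul_measure (hf.integrableOn_Icc)
  simp [ENNReal.inv_ne_top]
  linarith

lemma integral_unif (f : ℝ → ℝ) (a b : ℝ) (hab : a < b) :
    ∫ x, f x ∂(unif a b) = (b - a)⁻¹ * ∫ x in Icc a b, f x := by
  rw [unif, integral_smul_measure, ENNReal.toReal_inv, ENNReal.toReal_ofReal (by linarith)]
  rfl

lemma distortion_eq (γ : Finset ℝ) (hγ : γ.Nonempty) :
    distortion (mix (1/100) (unif 0 (1/3)) (unif (2/3) 1)) γ
      = (3/100) * (∫ x in Icc (0:ℝ) (1/3), F γ x)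
        + (297/100) * (∫ x in Icc (2/3:ℝ) 1, F γ x) := by
  have hcont := F_continuous γ hγ
  have I₁ : Integrable (F γ) (unif 0 (1/3)) := integrable_unif _ hcont _ _ (by norm_num)
  have I₂ : Integrable (F γ) (unif (2/3) 1) := integrable_unif _ hcont _ _ (by norm_num)
  have e : distortion (mix (1/100) (unif 0 (1/3)) (unif (2/3) 1)) γ
      = ∫ x, F γ x ∂(mix (1/100) (unif 0 (1/3)) (unif (2/3) 1)) := rfl
  rw [e, mix, integral_add_measure (I₁.smul_measure (by simp)) (I₂.smul_measure (by simp)),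
    integral_smul_measure, integral_smul_measure,
    ENNReal.toReal_ofReal (by norm_num : (0:ℝ) ≤ 1/100),
    ENNReal.toReal_ofReal (by norm_num : (0:ℝ) ≤ 1 - 1/100),
    integral_unif _ _ _ (by norm_num), integral_unif _ _ _ (by norm_num)]
  simp only [smul_eq_mul]
  norm_num
  ring

lemma Fstar (x : ℝ) :
    F {1/6, 3/4, 11/12} x
      = min ((x - 1/6) ^ 2) (min ((x - 3/4) ^ 2) ((x - 11/12) ^ 2)) := by
  rw [F]
  have e : ((fun c => (x - c) ^ 2) '' (({1/6, 3/4, 11/12} : Finset ℝ) : Set ℝ))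
      = insert ((x - 1/6) ^ 2) (insert ((x - 3/4) ^ 2) {(x - 11/12) ^ 2}) := by
    simp [Set.image_insert_eq]
  rw [e, csInf_insert (((Set.finite_singleton _).insert _).bddBelow) (Set.insert_nonempty _ _),
    csInf_insert ((Set.finite_singleton _).bddBelow) (Set.singleton_nonempty _),
    csInf_singleton]

lemma star_nonempty : ({1/6, 3/4, 11/12} : Finset ℝ).Nonempty := Finset.insert_nonempty _ _

lemma IL_star : ∫ x in Icc (0:ℝ) (1/3), F {1/6, 3/4, 11/12} x = 1/324 := by
  have e : ∀ x ∈ Icc (0:ℝ) (1/3), F {1/6, 3/4, 11/12} x = (x - 1/6) ^ 2 := by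
    intro x hx
    obtain ⟨h0, h1⟩ := hx
    rw [Fstar, min_eq_left (le_min (by nlinarith) (by nlinarith))]
  rw [setIntegral_congr_fun measurableSet_Icc e, isq' _ _ _ (by norm_num)]
  norm_num

lemma IR_star : ∫ x in Icc (2/3:ℝ) 1, F {1/6, 3/4, 11/12} x = 1/1296 := by
  have hcont := F_continuous _ star_nonempty
  rw [integral_Icc_eq_integral_Ioc, ← intervalIntegral.integral_of_le (by norm_num : (2/3:ℝ) ≤ 1),
    ← intervalIntegral.integral_add_adjacent_intervals (b := 5/6)
      (hcont.intervalIntegrable _ _) (hcont.intervalIntegrable _ _)]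
  have e1 : ∫ x in (2/3:ℝ)..(5/6), F {1/6, 3/4, 11/12} x = ∫ x in (2/3:ℝ)..(5/6), (x - 3/4) ^ 2 := by
    apply intervalIntegral.integral_congr
    intro x hx
    rw [uIcc_of_le (by norm_num)] at hx
    obtain ⟨h0, h1⟩ := hx
    rw [Fstar, min_eq_left (show (x - 3/4) ^ 2 ≤ (x - 11/12) ^ 2 by nlinarith),
      min_eq_right (show (x - 3/4) ^ 2 ≤ (x - 1/6) ^ 2 by nlinarith)]
  have e2 : ∫ x in (5/6:ℝ)..1, F {1/6, 3/4, 11/12} x = ∫ x in (5/6:ℝ)..1, (x - 11/12) ^ 2 := by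
    apply intervalIntegral.integral_congr
    intro x hx
    rw [uIcc_of_le (by norm_num)] at hx
    obtain ⟨h0, h1⟩ := hx
    rw [Fstar, min_eq_right (show (x - 11/12) ^ 2 ≤ (x - 3/4) ^ 2 by nlinarith),
      min_eq_right (show (x - 11/12) ^ 2 ≤ (x - 1/6) ^ 2 by nlinarith)]
  rw [e1, e2, isq, isq]
  norm_num

lemma upper : distortion (mix (1/100) (unif 0 (1/3)) (unif (2/3) 1)) {1/6, 3/4, 11/12}
    = 103 / 43200 := by
  rw [distortion_eq _ star_nonempty, IL_star, IR_star]
  norm_num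

lemma lower (γ : Finset ℝ) (hne : γ.Nonempty) (hcard : γ.card ≤ 3) :
    103/43200 ≤ distortion (mix (1/100) (unif 0 (1/3)) (unif (2/3) 1)) γ := by
  classical
  rw [distortion_eq γ hne]
  set IL := ∫ x in Icc (0:ℝ) (1/3), F γ x with hIL0
  set IR := ∫ x in Icc (2/3:ℝ) 1, F γ x with hIR0
  set a := (γ.filter (fun c => c ≤ 1/2)).card with ha
  set b := (γ.filter (fun c => ¬ (c ≤ 1/2))).card with hb
  have hab : a + b = γ.card := Finset.card_filter_add_card_filter_not _
  have hab3 : a + b ≤ 3 := by omega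
  -- left window cards bounded by a
  have hLcard : ∀ r : ℝ, r ≤ 1/6 →
      (γ.filter (fun c => 0 - r < c ∧ c < 1/3 + r)).card ≤ a := by
    intro r hr
    apply Finset.card_le_card
    intro c hc
    simp only [Finset.mem_filter] at hc ⊢
    exact ⟨hc.1, by linarith [hc.2.2]⟩
  -- right window cards bounded by b
  have hRcard : ∀ r : ℝ, r ≤ 1/6 →
      (γ.filter (fun c => 2/3 - r < c ∧ c < 1 + r)).card ≤ b := by
    intro r hr
    apply Finset.card_le_card
    intro c hc
    simp only [Finset.mem_filter] at hc ⊢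
    exact ⟨hc.1, by push_neg; linarith [hc.2.1]⟩
  have hILnn : (0:ℝ) ≤ IL :=
    setIntegral_nonneg measurableSet_Icc (fun x _ => F_nonneg γ hne x)
  have hIRnn : (0:ℝ) ≤ IR :=
    setIntegral_nonneg measurableSet_Icc (fun x _ => F_nonneg γ hne x)
  have hcases : a = 0 ∨ a = 1 ∨ a = 2 ∨ a = 3 := by omega
  rcases hcases with ha0 | ha1 | ha2 | ha3
  · -- a = 0
    by_cases hmid : ∀ c ∈ γ, 7/12 < c
    · -- all points > 7/12
      have hILb : (79:ℝ)/1296 ≤ IL := by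
        have mono : ∫ x in Icc (0:ℝ) (1/3), (x - 7/12) ^ 2 ≤ IL := by
          apply setIntegral_mono_on
            (((continuous_id.sub continuous_const).pow 2).integrableOn_Icc)
            ((F_continuous γ hne).integrableOn_Icc) measurableSet_Icc
          intro x hx
          exact F_ge_far γ hne (7/12) x (fun c hc => (hmid c hc).le)
            (hx.2.trans (by norm_num))
        rw [isq' _ _ _ (by norm_num)] at mono
        norm_num at mono
        linarith
      have hIRb := window_bound γ hne (2/3) 1 (1/18) (by norm_num) (by norm_num) 3
        (le_trans (Finset.card_le_card (Finset.filter_subset _ _)) hcard)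
      norm_num at hIRb
      rw [← hIR0] at hIRb
      linarith
    · push_neg at hmid
      obtain ⟨c₀, hc₀γ, hc₀⟩ := hmid
      have hr2 : (γ.filter (fun c => 2/3 - 1/12 < c ∧ c < 1 + 1/12)).card ≤ 2 := by
        have hsub : γ.filter (fun c => 2/3 - 1/12 < c ∧ c < 1 + 1/12) ⊆ γ.erase c₀ := by
          intro c hc
          simp only [Finset.mem_filter] at hc
          exact Finset.mem_erase.2 ⟨by intro h; rw [h] at hc; linarith [hc.2.1], hc.1⟩
        have := Finset.card_le_card hsub
        rw [Finset.card_erase_of_mem hc₀γ] at this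
        omega
      have hILb := window_bound γ hne 0 (1/3) (1/6) (by norm_num) (by norm_num) 0
        (le_trans (hLcard (1/6) le_rfl) (by omega))
      have hIRb := window_bound γ hne (2/3) 1 (1/12) (by norm_num) (by norm_num) 2 hr2
      norm_num at hILb hIRb
      rw [← hIL0] at hILb
      rw [← hIR0] at hIRb
      linarith
  · -- a = 1
    have hILb := window_bound γ hne 0 (1/3) (1/6) (by norm_num) (by norm_num) 1
      (le_trans (hLcard (1/6) le_rfl) (by omega))
    have hIRb := window_bound γ hne (2/3) 1 (1/12) (by norm_num) (by norm_num) 2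
      (le_trans (hRcard (1/12) (by norm_num)) (by omega))
    norm_num at hILb hIRb
    rw [← hIL0] at hILb
    rw [← hIR0] at hIRb
    linarith
  · -- a = 2
    have hILb := window_bound γ hne 0 (1/3) (1/12) (by norm_num) (by norm_num) 2
      (le_trans (hLcard (1/12) (by norm_num)) (by omega))
    have hIRb := window_bound γ hne (2/3) 1 (1/12) (by norm_num) (by norm_num) 1
      (le_trans (hRcard (1/12) (by norm_num)) (by omega))
    norm_num at hILb hIRb
    rw [← hIL0] at hILb
    rw [← hIR0] at hIRb
    linarith
  · -- a = 3
    have hIRb := window_bound γ hne (2/3) 1 (1/6) (by norm_num) (by norm_num) 0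
      (le_trans (hRcard (1/6) le_rfl) (by omega))
    norm_num at hIRb
    rw [← hIR0] at hIRb
    linarith

theorem stmt7 :
    IsOptimal (mix (1/100) (unif 0 (1/3)) (unif (2/3) 1)) 3 {1/6, 3/4, 11/12} ∧
    quantErr (mix (1/100) (unif 0 (1/3)) (unif (2/3) 1)) 3 = 103 / 43200 := by
  classical
  set P := mix (1/100) (unif 0 (1/3)) (unif (2/3) 1) with hP
  have hc3 : ({1/6, 3/4, 11/12} : Finset ℝ).card ≤ 3 := by
    refine le_trans (Finset.card_insert_le _ _) (Nat.succ_le_succ ?_)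
    refine le_trans (Finset.card_insert_le _ _) (Nat.succ_le_succ ?_)
    simp
  have hmem : (103/43200 : ℝ) ∈
      { v | ∃ γ : Finset ℝ, γ.Nonempty ∧ γ.card ≤ 3 ∧ v = distortion P γ } :=
    ⟨{1/6, 3/4, 11/12}, star_nonempty, hc3, upper.symm⟩
  have hlb : ∀ v ∈ { v | ∃ γ : Finset ℝ, γ.Nonempty ∧ γ.card ≤ 3 ∧ v = distortion P γ },
      (103/43200 : ℝ) ≤ v := by
    rintro v ⟨γ, h1, h2, rfl⟩
    exact lower γ h1 h2
  have hq : quantErr P 3 = 103/43200 := by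
    rw [quantErr]
    exact le_antisymm (csInf_le ⟨103/43200, hlb⟩ hmem) (le_csInf ⟨_, hmem⟩ hlb)
  exact ⟨⟨star_nonempty, hc3, upper.trans hq.symm⟩, hq⟩
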